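/- In the specific blind one-counter parity game G(A) given by the deterministic blind one-counter parity automaton A = ({q₀,q₁,q₂,q₃,q₄}, {a,b,c,d}, {A}, δ, q₀, ⊥, col) with Player-0 states {q₂,q₃}, Player-1 states {q₀,q₁,q₄}, transitions δ(q₀,a,X)=(q₀,AX), δ(q₀,b,A)=δ(q₁,b,A)=(q₁,ε), δ(q₁,c,X)=(q₂,X), δ(q₂,a,X)=(q₃,X), δ(q₂,b,X)=(q₄,X), δ(q₃,c,X)=(q₄,AX), δ(q₄,c,X)=(q₃,AX), δ(q₃,d,A)=(q₃,A), δ(q₄,d,A)=(q₄,A) for X∈{A,⊥}, and priorities col(q₀)=col(q₁)=2, col(q₂)=col(q₃)=0, col(q₄)=1: Player 0 has a winning strategy from the initial configuration (q₀,⊥) which is realizable by a deterministic pushdown automaton, but no deterministic blind one-counter automaton realizes a winning strategy for Player 0. -/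

import Mathlib

/-!  Common definitions: pushdown machines, ω-pushdown automata, pushdown games,
pushdown strategies (deterministic pushdown automata with output), and
alternating two-way / nondeterministic one-way parity tree automata. -/

/-- Kinds of letters in a visibly pushdown alphabet. -/
inductive VKind : Type
  | call | ret | intern

/-- A pushdown machine over states `Q`, input alphabet `A` and stack alphabet `Γ`.
The initial stack symbol `⊥` is implicit: a stack content `γ⊥ ∈ Γ*⊥` is modeled by
the list `γ` of symbols above `⊥`, and the top-of-stack argument `none` of the
transition function represents `⊥` (i.e. the empty list).  A transition replaces the
topmost symbol by the returned word (respectively pushes the returned word on top of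
`⊥`), so `⊥` can neither be pushed onto nor removed from the stack.  The input
letter `none` is `ε`. -/
structure PDM (Q A Γ : Type) where
  δ : Q → Option A → Option Γ → Set (Q × List Γ)
  qin : Q

namespace PDM

variable {Q A Γ : Type}

/-- A configuration: a state together with the stack content (above `⊥`). -/
abbrev Conf (Q Γ : Type) : Type := Q × List Γ

/-- Stack height of a configuration `(q,γ⊥)`: the length `|γ⊥|` (the `⊥` counts). -/
def sh (c : Conf Q Γ) : ℕ := c.2.length + 1

/-- One transition step of the machine, labeled by `none` (an `ε`-move) or `some a`. -/
def Step (M : PDM Q A Γ) (c : Conf Q Γ) (a : Option A) (c' : Conf Q Γ) : Prop :=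
  match c.2 with
  | [] => c' ∈ M.δ c.1 a none
  | t :: rest => ∃ γ' : List Γ, (c'.1, γ') ∈ M.δ c.1 a (some t) ∧ c'.2 = γ' ++ rest

/-- Determinism: `|δ(q,a,A)| + |δ(q,ε,A)| ≤ 1` for all `q ∈ Q`, `a ∈ A`, `A ∈ Γ⊥`. -/
def Deterministic (M : PDM Q A Γ) : Prop :=
  ∀ (q : Q) (t : Option Γ),
    (∀ a : Option A, (M.δ q a t).Subsingleton) ∧
    (∀ a : A, (M.δ q (some a) t).Nonempty → M.δ q none t = ∅)

/-- A realtime machine has no `ε`-transitions. -/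
def Realtime (M : PDM Q A Γ) : Prop := ∀ q t, M.δ q none t = ∅

/-- Normal form: every transition is a push of exactly one symbol (`δ(q,a,A)=(q',A'A)`),
a skip (`δ(q,a,A)=(q',A)`), or a pop (`δ(q,a,A)=(q',ε)`). -/
def NormalForm (M : PDM Q A Γ) : Prop :=
  ∀ q a t p, p ∈ M.δ q a t →
    p.2 = ([] : List Γ) ∨ p.2 = t.toList ∨ ∃ B : Γ, p.2 = B :: t.toList

/-- A blind one-counter machine: every transition enabled with empty stack (counter `0`)
is also enabled, with the same state change and counter effect, with nonempty stack:
`δ(q,a,⊥) ∋ (q',Aⁿ⊥)` implies `δ(q,a,A) ∋ (q',AⁿA)`. -/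
def Blind (M : PDM Q A Unit) : Prop :=
  ∀ (q : Q) (a : Option A) (p : Q × List Unit),
    p ∈ M.δ q a none → (p.1, p.2 ++ [()]) ∈ M.δ q a (some ())

/-- A visibly pushdown machine w.r.t. the partition `kind` of the input alphabet into
calls, returns and internal actions: no `ε`-transitions; on a call exactly one symbol is
pushed and the transition does not depend on the top of the stack; on a return the top
symbol is popped (`⊥` is left unchanged); on an internal action the stack is unchanged
and the transition does not depend on the top of the stack. -/
def Visibly (M : PDM Q A Γ) (kind : A → VKind) : Prop :=
  (∀ q t, M.δ q none t = ∅) ∧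
  (∀ q a, kind a = VKind.call → ∃ mv : Set (Q × Γ),
      ∀ t, M.δ q (some a) t = (fun p : Q × Γ => (p.1, p.2 :: t.toList)) '' mv) ∧
  (∀ q a t, kind a = VKind.ret → ∀ p ∈ M.δ q (some a) t, p.2 = ([] : List Γ)) ∧
  (∀ q a, kind a = VKind.intern → ∃ mv : Set Q,
      ∀ t, M.δ q (some a) t = (fun q' : Q => (q', t.toList)) '' mv)

/-- `ρ` is an infinite run of `M` on the ω-word `α`: it starts in the initial
configuration `(q_in,⊥)`, each step follows `δ` on a letter or on `ε`, and the
consumed letters (the non-`ε` labels, in order) form exactly `α`. -/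
def IsRunOn (M : PDM Q A Γ) (ρ : ℕ → Conf Q Γ) (α : ℕ → A) : Prop :=
  ρ 0 = (M.qin, []) ∧
  ∃ u : ℕ → Option A,
    (∀ n : ℕ, M.Step (ρ n) (u n) (ρ (n + 1))) ∧
    ∃ φ : ℕ → ℕ, StrictMono φ ∧ (∀ k : ℕ, u (φ k) = some (α k)) ∧
      ∀ n : ℕ, (u n).isSome = true → ∃ k : ℕ, φ k = n

/-- `Inf(ρ)`: states occurring infinitely often in `ρ`. -/
def InfOcc (ρ : ℕ → Conf Q Γ) : Set Q := {q | ∀ n : ℕ, ∃ m, n ≤ m ∧ (ρ m).1 = q}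

/-- `Steps_ρ = {n | ∀ m ≥ n, sh(ρ(m)) ≥ sh(ρ(n))}`. -/
def StepsSet (ρ : ℕ → Conf Q Γ) : Set ℕ := {n | ∀ m : ℕ, n ≤ m → sh (ρ n) ≤ sh (ρ m)}

/-- States occurring infinitely often in the subsequence `ρ|_{Steps_ρ}`. -/
def InfOccStair (ρ : ℕ → Conf Q Γ) : Set Q :=
  {q | ∀ n : ℕ, ∃ m, n ≤ m ∧ m ∈ StepsSet ρ ∧ (ρ m).1 = q}

/-- Parity condition: the minimal priority seen infinitely often is even. -/
def ParityAcc (col : Q → ℕ) (ρ : ℕ → Conf Q Γ) : Prop :=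
  Even (sInf (col '' InfOcc ρ))

/-- Stair parity condition: the minimal priority seen infinitely often in
`ρ|_{Steps_ρ}` is even. -/
def StairParityAcc (col : Q → ℕ) (ρ : ℕ → Conf Q Γ) : Prop :=
  Even (sInf (col '' InfOccStair ρ))

/-- The ω-language of the parity pushdown automaton `(M, col)`. -/
def ParityLang (M : PDM Q A Γ) (col : Q → ℕ) : Set (ℕ → A) :=
  {α | ∃ ρ : ℕ → Conf Q Γ, M.IsRunOn ρ α ∧ ParityAcc col ρ}

/-- The ω-language of the stair parity pushdown automaton `(M, col)`. -/
def StairParityLang (M : PDM Q A Γ) (col : Q → ℕ) : Set (ℕ → A) :=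
  {α | ∃ ρ : ℕ → Conf Q Γ, M.IsRunOn ρ α ∧ StairParityAcc col ρ}

/-- Acceptance of a finite word by the pushdown automaton `(M, F)`: some finite run
from the initial configuration consuming exactly `w` ends in a final state. -/
def AcceptsFin (M : PDM Q A Γ) (F : Set Q) (w : List A) : Prop :=
  ∃ (m : ℕ) (ρ : ℕ → Conf Q Γ) (u : ℕ → Option A),
    ρ 0 = (M.qin, []) ∧ (∀ k < m, M.Step (ρ k) (u k) (ρ (k + 1))) ∧
    (List.ofFn (fun k : Fin m => u k.1)).reduceOption = w ∧ (ρ m).1 ∈ F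

/-- An infinite play of the pushdown game: a sequence of configurations starting in the
initial configuration, together with the labels of the chosen transitions. -/
def IsPlay (M : PDM Q A Γ) (conf : ℕ → Conf Q Γ) (lab : ℕ → Option A) : Prop :=
  conf 0 = (M.qin, []) ∧ ∀ n : ℕ, M.Step (conf n) (lab n) (conf (n + 1))

/-- Player `i` has a winning strategy (as an abstract function from histories of moves
to moves) in the pushdown game on `M` given by the partition `owner` of the states,
where Player 0 wins an infinite play `conf` iff `W conf` holds: the strategy always
proposes an enabled transition at any reachable consistent position owned by Player `i`,
and every infinite play consistent with it is won by Player `i`. -/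
def HasAbstractWinning (M : PDM Q A Γ) (owner : Q → Fin 2)
    (W : (ℕ → Conf Q Γ) → Prop) (i : Fin 2) : Prop :=
  ∃ σ : List (Option A) → Option A,
    (∀ (n : ℕ) (conf : ℕ → Conf Q Γ) (lab : ℕ → Option A),
      conf 0 = (M.qin, []) →
      (∀ k < n, M.Step (conf k) (lab k) (conf (k + 1))) →
      (∀ k < n, owner (conf k).1 = i → lab k = σ (List.ofFn (fun j : Fin k => lab j.1))) →
      owner (conf n).1 = i →
      ∃ c' : Conf Q Γ, M.Step (conf n) (σ (List.ofFn (fun j : Fin n => lab j.1))) c') ∧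
    (∀ (conf : ℕ → Conf Q Γ) (lab : ℕ → Option A),
      IsPlay M conf lab →
      (∀ n : ℕ, owner (conf n).1 = i → lab n = σ (List.ofFn (fun j : Fin n => lab j.1))) →
      (W conf ↔ i = 0))

/-- The pushdown game on `M` with partition `owner` and winning condition `W`
(for Player 0) is determined. -/
def Determined (M : PDM Q A Γ) (owner : Q → Fin 2)
    (W : (ℕ → Conf Q Γ) → Prop) : Prop :=
  ∃ i : Fin 2, HasAbstractWinning M owner W i

end PDM

/-- A deterministic pushdown automaton with output (a pushdown strategy): it reads the
opponent's moves and outputs the player's own next choices.  `δ s inp t = some (s', γ', out)`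
means: in state `s` with top of stack `t` (`none` = `⊥`), on input `inp` (`none` = `ε`)
the machine moves to state `s'`, replaces the top of the stack by `γ'` and outputs `out`
(`none` = `ε`-output).  Partiality of `δ` gives determinism per input letter. -/
structure StratPDA (A Γ' : Type) where
  S : Type
  sin : S
  δ : S → Option A → Option Γ' → Option (S × List Γ' × Option A)

namespace StratPDA

variable {Q A Γ Γ' : Type}

/-- Determinism: if an `ε`-input transition is present then no letter transition is. -/
def Det (T : StratPDA A Γ') : Prop :=
  ∀ (s : T.S) (t : Option Γ'),
    (T.δ s none t).isSome = true → ∀ a : A, T.δ s (some a) t = none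

/-- One step of the strategy transducer (same stack convention as for `PDM`). -/
def TStep (T : StratPDA A Γ') (c : T.S × List Γ') (inp out : Option A)
    (c' : T.S × List Γ') : Prop :=
  match c.2 with
  | [] => T.δ c.1 inp none = some (c'.1, c'.2, out)
  | t :: rest => ∃ γ' : List Γ',
      T.δ c.1 inp (some t) = some (c'.1, γ', out) ∧ c'.2 = γ' ++ rest

/-- A blind one-counter strategy transducer: every transition enabled with counter `0`
is also enabled, with the same effect, with nonzero counter. -/
def Blind (T : StratPDA A Unit) : Prop :=
  ∀ (s : T.S) (inp : Option A) (r : T.S × List Unit × Option A),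
    T.δ s inp none = some r → T.δ s inp (some ()) = some (r.1, r.2.1 ++ [()], r.2.2)

/-- A realtime strategy transducer: no transition both reads `ε` and outputs `ε`
(every transition carries a letter, either read or written). -/
def Realtime (T : StratPDA A Γ') : Prop :=
  ∀ (s : T.S) (t : Option Γ') (r : T.S × List Γ' × Option A),
    T.δ s none t = some r → r.2.2 ≠ none

/-- Stack discipline of a visibly pushdown machine for the letter `a`. -/
def VStk (kind : A → VKind) (a : A) (t : Option Γ') (γ' : List Γ') : Prop :=
  match kind a with
  | VKind.call => ∃ B : Γ', γ' = B :: t.toList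
  | VKind.ret => γ' = ([] : List Γ')
  | VKind.intern => γ' = t.toList

/-- A visibly pushdown strategy transducer: every transition carries exactly one letter
(the letter read on input transitions, the letter written on output transitions) and the
stack is used according to the kind of that letter. -/
def Visibly (T : StratPDA A Γ') (kind : A → VKind) : Prop :=
  (∀ (s : T.S) (a : A) (t : Option Γ') (s' : T.S) (γ' : List Γ') (out : Option A),
      T.δ s (some a) t = some (s', γ', out) → out = none ∧ VStk kind a t γ') ∧
  (∀ (s : T.S) (t : Option Γ') (s' : T.S) (γ' : List Γ') (out : Option A),
      T.δ s none t = some (s', γ', out) → ∃ a : A, out = some a ∧ VStk kind a t γ')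

/-- The strategy transducer `T`, playing for Player `i`, is consistent with the play
`(conf, lab)` of the pushdown game on `M`: `T` runs in lockstep with the play, reading
the opponent's moves and outputting Player `i`'s moves. -/
def Consistent (T : StratPDA A Γ') (M : PDM Q A Γ) (owner : Q → Fin 2) (i : Fin 2)
    (conf : ℕ → PDM.Conf Q Γ) (lab : ℕ → Option A)
    (τ : ℕ → T.S × List Γ') : Prop :=
  τ 0 = (T.sin, []) ∧
  ∀ n : ℕ, T.TStep (τ n) (if owner (conf n).1 = i then none else lab n)
      (if owner (conf n).1 = i then lab n else none) (τ (n + 1))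

/-- `T` realizes a winning strategy for Player `i` in the pushdown game on `M` with
partition `owner`, where Player 0 wins an infinite play `conf` iff `W conf` holds:
`T` is deterministic; along every finite `T`-consistent play prefix `T` proposes an
enabled move at positions of Player `i` and can process every enabled move of the
opponent; and every infinite play consistent with `T` is won by Player `i`. -/
def IsWinningStrat (T : StratPDA A Γ') (M : PDM Q A Γ) (owner : Q → Fin 2)
    (W : (ℕ → PDM.Conf Q Γ) → Prop) (i : Fin 2) : Prop :=
  T.Det ∧
  (∀ (n : ℕ) (conf : ℕ → PDM.Conf Q Γ) (lab : ℕ → Option A) (τ : ℕ → T.S × List Γ'),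
    conf 0 = (M.qin, []) → τ 0 = (T.sin, []) →
    (∀ k < n, M.Step (conf k) (lab k) (conf (k + 1))) →
    (∀ k < n, T.TStep (τ k) (if owner (conf k).1 = i then none else lab k)
        (if owner (conf k).1 = i then lab k else none) (τ (k + 1))) →
    ((owner (conf n).1 = i →
        ∃ (x : Option A) (c' : PDM.Conf Q Γ) (τ' : T.S × List Γ'),
          M.Step (conf n) x c' ∧ T.TStep (τ n) none x τ') ∧
     (owner (conf n).1 ≠ i →
        ∀ (x : Option A) (c' : PDM.Conf Q Γ), M.Step (conf n) x c' →
          ∃ τ' : T.S × List Γ', T.TStep (τ n) x none τ'))) ∧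
  (∀ (conf : ℕ → PDM.Conf Q Γ) (lab : ℕ → Option A) (τ : ℕ → T.S × List Γ'),
    PDM.IsPlay M conf lab → T.Consistent M owner i conf lab τ → (W conf ↔ i = 0))

end StratPDA

/-! Tree automata. -/

/-- Positive Boolean formulas over `X` (with `true` and `false`). -/
inductive PosBool (X : Type) : Type
  | tru | fls
  | var (x : X)
  | and (f g : PosBool X)
  | or (f g : PosBool X)

/-- Satisfaction of a positive Boolean formula by a set of variables. -/
def PosBool.Sat {X : Type} : PosBool X → Set X → Prop
  | .tru, _ => True
  | .fls, _ => False
  | .var x, Y => x ∈ Y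
  | .and f g, Y => f.Sat Y ∧ g.Sat Y
  | .or f g, Y => f.Sat Y ∨ g.Sat Y

/-- Navigation directions in a `Γ`-tree: up (to the parent), stay, or down to child `A`.
Nodes of the full `Γ`-tree are lists over `Γ` with the last chosen direction at the head,
so the child `γ.↓_A` is `A :: γ` and the parent of `A :: γ` is `γ`. -/
inductive TMove (Γ : Type) : Type
  | up | stay
  | down (A : Γ)

def TMove.apply {Γ : Type} : TMove Γ → List Γ → Option (List Γ)
  | .up, [] => none
  | .up, _ :: l => some l
  | .stay, l => some l
  | .down A, l => some (A :: l)

/-- An alternating two-way parity tree automaton over `Sig`-labeled full `Γ`-trees. -/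
structure A2TA (Sig Γ : Type) where
  Q : Type
  qin : Q
  δ : Q → Sig → PosBool (TMove Γ × Q)
  col : Q → ℕ

/-- A run of the A2TA `B` on the `Sig`-labeled full `Γ`-tree `lab`: a tree (over some
branching type `Ξ`, children obtained by consing) whose nodes are labeled by pairs
(state, tree node), rooted at `(q_in, ε)`, such that the successors of every node
satisfy the transition formula. -/
structure A2Run {Sig Γ : Type} (B : A2TA Sig Γ) (lab : List Γ → Sig) where
  Ξ : Type
  tree : Set (List Ξ)
  rlab : List Ξ → B.Q × List Γ
  root_mem : [] ∈ tree
  root_lab : rlab [] = (B.qin, [])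
  closed : ∀ (ξ : Ξ) (l : List Ξ), ξ :: l ∈ tree → l ∈ tree
  trans : ∀ l ∈ tree, ∃ S : Set (TMove Γ × B.Q),
    PosBool.Sat (B.δ (rlab l).1 (lab (rlab l).2)) S ∧
    ∀ dq ∈ S, ∃ γ' : List Γ, TMove.apply dq.1 (rlab l).2 = some γ' ∧
      ∃ ξ : Ξ, ξ :: l ∈ tree ∧ rlab (ξ :: l) = (dq.2, γ')

/-- An infinite path of a run, starting at the root. -/
def A2Run.IsPath {Sig Γ : Type} {B : A2TA Sig Γ} {lab : List Γ → Sig}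
    (r : A2Run B lab) (π : ℕ → List r.Ξ) : Prop :=
  π 0 = [] ∧ ∀ n : ℕ, (∃ ξ : r.Ξ, π (n + 1) = ξ :: π n) ∧ π (n + 1) ∈ r.tree

/-- `B` accepts `lab`: some run is accepting, i.e. on every infinite path the minimal
priority seen infinitely often is even. -/
def A2TA.Accepts {Sig Γ : Type} (B : A2TA Sig Γ) (lab : List Γ → Sig) : Prop :=
  ∃ r : A2Run B lab, ∀ π : ℕ → List r.Ξ, r.IsPath π →
    Even (sInf (B.col '' {q | ∀ n : ℕ, ∃ m, n ≤ m ∧ (r.rlab (π m)).1 = q}))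

/-- Stair acceptance for an automaton with the same components (a StA2TA): on every
infinite path the minimal priority seen infinitely often at the `Steps` positions
(positions whose stack/tree-node height is never exceeded from below later) is even. -/
def A2TA.StairAccepts {Sig Γ : Type} (B : A2TA Sig Γ) (lab : List Γ → Sig) : Prop :=
  ∃ r : A2Run B lab, ∀ π : ℕ → List r.Ξ, r.IsPath π →
    Even (sInf (B.col '' {q | ∀ n : ℕ, ∃ m, n ≤ m ∧
      (∀ m' : ℕ, m ≤ m' → (r.rlab (π m)).2.length ≤ (r.rlab (π m')).2.length) ∧
      (r.rlab (π m)).1 = q}))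

/-- A nondeterministic one-way parity tree automaton over `Sig`-labeled full `Γ`-trees. -/
structure N1TA (Sig Γ : Type) where
  Q : Type
  qin : Q
  Δ : Q → Sig → Set (Γ → Q)
  col : Q → ℕ

/-- Acceptance for N1TA: some run (one state per node, top-down) is such that along
every branch the minimal priority seen infinitely often is even. -/
def N1TA.Accepts {Sig Γ : Type} (E : N1TA Sig Γ) (lab : List Γ → Sig) : Prop :=
  ∃ r : List Γ → E.Q, r [] = E.qin ∧
    (∀ l : List Γ, ∃ f ∈ E.Δ (r l) (lab l), ∀ A : Γ, r (A :: l) = f A) ∧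
    ∀ β : ℕ → Γ, Even (sInf (E.col ''
      {q | ∀ n : ℕ, ∃ m, n ≤ m ∧ r (List.ofFn (fun j : Fin m => β j.1)).reverse = q}))


/-- The states `q₀,…,q₄` of the blind one-counter game. -/
inductive St : Type
  | q0 | q1 | q2 | q3 | q4

/-- The alphabet `{a, b, c, d}`. -/
inductive Letter : Type
  | a | b | c | d

/-- The transition function of the deterministic blind one-counter parity automaton `A`
(for `X ∈ {A,⊥}`): `δ(q₀,a,X)=(q₀,AX)`, `δ(q₀,b,A)=δ(q₁,b,A)=(q₁,ε)`, `δ(q₁,c,X)=(q₂,X)`,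
`δ(q₂,a,X)=(q₃,X)`, `δ(q₂,b,X)=(q₄,X)`, `δ(q₃,c,X)=(q₄,AX)`, `δ(q₄,c,X)=(q₃,AX)`,
`δ(q₃,d,A)=(q₃,A)`, `δ(q₄,d,A)=(q₄,A)`. -/
def gameδ : St → Option Letter → Option Unit → Set (St × List Unit)
  | St.q0, some Letter.a, t => {(St.q0, () :: t.toList)}
  | St.q0, some Letter.b, some _ => {(St.q1, [])}
  | St.q1, some Letter.b, some _ => {(St.q1, [])}
  | St.q1, some Letter.c, t => {(St.q2, t.toList)}
  | St.q2, some Letter.a, t => {(St.q3, t.toList)}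
  | St.q2, some Letter.b, t => {(St.q4, t.toList)}
  | St.q3, some Letter.c, t => {(St.q4, () :: t.toList)}
  | St.q4, some Letter.c, t => {(St.q3, () :: t.toList)}
  | St.q3, some Letter.d, some _ => {(St.q3, [()])}
  | St.q4, some Letter.d, some _ => {(St.q4, [()])}
  | _, _, _ => ∅

def gameM : PDM St Letter Unit := ⟨gameδ, St.q0⟩

/-- Player 0 owns `q₂, q₃`; Player 1 owns `q₀, q₁, q₄`. -/
def gameOwner : St → Fin 2
  | St.q2 => 0
  | St.q3 => 0
  | _ => 1

/-- `col(q₀)=col(q₁)=2`, `col(q₂)=col(q₃)=0`, `col(q₄)=1`. -/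
def gameCol : St → ℕ
  | St.q0 => 2
  | St.q1 => 2
  | St.q2 => 0
  | St.q3 => 0
  | St.q4 => 1

section Aux
open St Letter

instance : Finite St :=
  Finite.of_surjective (fun i : Fin 5 => [St.q0, St.q1, St.q2, St.q3, St.q4].get i)
    (by intro s; cases s
        exacts [⟨0, rfl⟩, ⟨1, rfl⟩, ⟨2, rfl⟩, ⟨3, rfl⟩, ⟨4, rfl⟩])

lemma unit_list (l : List Unit) : l = List.replicate l.length () := by
  induction l with
  | nil => rfl
  | cons h t ih => cases h; rw [List.length_cons, List.replicate_succ]; exact congrArg _ ih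

lemma gameM_det : gameM.Deterministic := by
  intro q t
  constructor
  · intro x
    cases q <;> rcases x with _ | (_|_|_|_) <;> rcases t with _ | ⟨⟩ <;>
      simp [gameM, gameδ, Set.Subsingleton]
  · intro x _
    cases q <;> rcases t with _ | ⟨⟩ <;> simp [gameM, gameδ]

lemma gameM_blind : gameM.Blind := by
  intro q x p hp
  cases q <;> rcases x with _ | (_|_|_|_) <;>
    simp_all [gameM, gameδ] <;> simp [hp]

-- step lemmas
lemma gstep_a (γ : List Unit) : gameM.Step (q0, γ) (some a) (q0, () :: γ) := by
  cases γ with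
  | nil => simp [PDM.Step, gameM, gameδ]
  | cons h t => exact ⟨[(), ()], by simp [gameM, gameδ], rfl⟩

lemma gstep_b0 (γ : List Unit) : gameM.Step (q0, () :: γ) (some b) (q1, γ) :=
  ⟨[], by simp [gameM, gameδ], rfl⟩

lemma gstep_b1 (γ : List Unit) : gameM.Step (q1, () :: γ) (some b) (q1, γ) :=
  ⟨[], by simp [gameM, gameδ], rfl⟩

lemma gstep_c1 (γ : List Unit) : gameM.Step (q1, γ) (some c) (q2, γ) := by
  cases γ with
  | nil => simp [PDM.Step, gameM, gameδ]
  | cons h t => exact ⟨[()], by simp [gameM, gameδ], rfl⟩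

lemma gstep_a2 (γ : List Unit) : gameM.Step (q2, γ) (some a) (q3, γ) := by
  cases γ with
  | nil => simp [PDM.Step, gameM, gameδ]
  | cons h t => exact ⟨[()], by simp [gameM, gameδ], rfl⟩

lemma gstep_b2 (γ : List Unit) : gameM.Step (q2, γ) (some b) (q4, γ) := by
  cases γ with
  | nil => simp [PDM.Step, gameM, gameδ]
  | cons h t => exact ⟨[()], by simp [gameM, gameδ], rfl⟩

lemma gstep_c3 (γ : List Unit) : gameM.Step (q3, γ) (some c) (q4, () :: γ) := by
  cases γ with
  | nil => simp [PDM.Step, gameM, gameδ]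
  | cons h t => exact ⟨[(), ()], by simp [gameM, gameδ], rfl⟩

lemma gstep_c4 (γ : List Unit) : gameM.Step (q4, γ) (some c) (q3, () :: γ) := by
  cases γ with
  | nil => simp [PDM.Step, gameM, gameδ]
  | cons h t => exact ⟨[(), ()], by simp [gameM, gameδ], rfl⟩

lemma gstep_d3 (γ : List Unit) : gameM.Step (q3, () :: γ) (some d) (q3, () :: γ) :=
  ⟨[()], by simp [gameM, gameδ], rfl⟩

lemma gstep_d4 (γ : List Unit) : gameM.Step (q4, () :: γ) (some d) (q4, () :: γ) :=
  ⟨[()], by simp [gameM, gameδ], rfl⟩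

-- inversion lemmas
lemma ginv_q0 {γ : List Unit} {x c'} (h : gameM.Step (q0, γ) x c') :
    (x = some a ∧ c' = (q0, () :: γ)) ∨ (∃ γ₀, γ = () :: γ₀ ∧ x = some b ∧ c' = (q1, γ₀)) := by
  rcases γ with _ | ⟨⟨⟩, γ₀⟩ <;> rcases x with _ | (_|_|_|_) <;>
    rcases c' with ⟨q', γ'⟩ <;> simp_all [PDM.Step, gameM, gameδ] <;> aesop

lemma ginv_q1 {γ : List Unit} {x c'} (h : gameM.Step (q1, γ) x c') :
    (∃ γ₀, γ = () :: γ₀ ∧ x = some b ∧ c' = (q1, γ₀)) ∨ (x = some c ∧ c' = (q2, γ)) := by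
  rcases γ with _ | ⟨⟨⟩, γ₀⟩ <;> rcases x with _ | (_|_|_|_) <;>
    rcases c' with ⟨q', γ'⟩ <;> simp_all [PDM.Step, gameM, gameδ] <;> aesop

lemma ginv_q2 {γ : List Unit} {x c'} (h : gameM.Step (q2, γ) x c') :
    (x = some a ∧ c' = (q3, γ)) ∨ (x = some b ∧ c' = (q4, γ)) := by
  rcases γ with _ | ⟨⟨⟩, γ₀⟩ <;> rcases x with _ | (_|_|_|_) <;>
    rcases c' with ⟨q', γ'⟩ <;> simp_all [PDM.Step, gameM, gameδ] <;> aesop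

lemma ginv_q3 {γ : List Unit} {x c'} (h : gameM.Step (q3, γ) x c') :
    (x = some c ∧ c' = (q4, () :: γ)) ∨ (γ ≠ [] ∧ x = some d ∧ c' = (q3, γ)) := by
  rcases γ with _ | ⟨⟨⟩, γ₀⟩ <;> rcases x with _ | (_|_|_|_) <;>
    rcases c' with ⟨q', γ'⟩ <;> simp_all [PDM.Step, gameM, gameδ] <;> aesop

lemma ginv_q4 {γ : List Unit} {x c'} (h : gameM.Step (q4, γ) x c') :
    (x = some c ∧ c' = (q3, () :: γ)) ∨ (γ ≠ [] ∧ x = some d ∧ c' = (q4, γ)) := by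
  rcases γ with _ | ⟨⟨⟩, γ₀⟩ <;> rcases x with _ | (_|_|_|_) <;>
    rcases c' with ⟨q', γ'⟩ <;> simp_all [PDM.Step, gameM, gameδ] <;> aesop

end Aux

section Part3
open St Letter

deriving instance DecidableEq for St
deriving instance DecidableEq for Letter

/-- The mirror strategy transducer for Player 0. -/
def T0δ : St → Option Letter → Option Unit → Option (St × List Unit × Option Letter)
  | St.q0, some Letter.a, t => some (St.q0, () :: t.toList, none)
  | St.q0, some Letter.b, some _ => some (St.q1, [], none)
  | St.q1, some Letter.b, some _ => some (St.q1, [], none)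
  | St.q1, some Letter.c, t => some (St.q2, t.toList, none)
  | St.q2, none, none => some (St.q4, [], some Letter.b)
  | St.q2, none, some _ => some (St.q3, [()], some Letter.a)
  | St.q4, some Letter.c, t => some (St.q3, () :: t.toList, none)
  | St.q3, none, some _ => some (St.q3, [()], some Letter.d)
  | _, _, _ => none

def T0 : StratPDA Letter Unit := ⟨St, St.q0, T0δ⟩

lemma T0_det : T0.Det := by
  intro s t h x
  cases s <;> rcases t with _ | ⟨⟩ <;> rcases x with _|_|_|_ <;> simp_all [T0, T0δ]

lemma t0inv_q0 {γ : List Unit} {i o r} (h : T0.TStep (St.q0, γ) i o r) :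
    (i = some a ∧ o = none ∧ r = (q0, () :: γ)) ∨
    (∃ γ₀, γ = () :: γ₀ ∧ i = some b ∧ o = none ∧ r = (q1, γ₀)) := by
  rcases r with ⟨r1, r2⟩
  rcases γ with _ | ⟨⟨⟩, γ₀⟩ <;> rcases i with _ | (_|_|_|_) <;>
    simp_all [StratPDA.TStep, T0, T0δ, Prod.ext_iff] <;> aesop

lemma t0inv_q1 {γ : List Unit} {i o r} (h : T0.TStep (St.q1, γ) i o r) :
    (∃ γ₀, γ = () :: γ₀ ∧ i = some b ∧ o = none ∧ r = (q1, γ₀)) ∨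
    (i = some c ∧ o = none ∧ r = (q2, γ)) := by
  rcases r with ⟨r1, r2⟩
  rcases γ with _ | ⟨⟨⟩, γ₀⟩ <;> rcases i with _ | (_|_|_|_) <;>
    simp_all [StratPDA.TStep, T0, T0δ, Prod.ext_iff] <;> aesop

lemma t0inv_q2 {γ : List Unit} {i o r} (h : T0.TStep (St.q2, γ) i o r) :
    (γ = [] ∧ i = none ∧ o = some b ∧ r = (q4, [])) ∨
    (γ ≠ [] ∧ i = none ∧ o = some a ∧ r = (q3, γ)) := by
  rcases r with ⟨r1, r2⟩
  rcases γ with _ | ⟨⟨⟩, γ₀⟩ <;> rcases i with _ | (_|_|_|_) <;>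
    simp_all [StratPDA.TStep, T0, T0δ, Prod.ext_iff] <;> aesop

lemma t0inv_q3 {γ : List Unit} {i o r} (h : T0.TStep (St.q3, γ) i o r) :
    γ ≠ [] ∧ i = none ∧ o = some d ∧ r = (q3, γ) := by
  rcases r with ⟨r1, r2⟩
  rcases γ with _ | ⟨⟨⟩, γ₀⟩ <;> rcases i with _ | (_|_|_|_) <;>
    simp_all [StratPDA.TStep, T0, T0δ, Prod.ext_iff] <;> aesop

lemma t0inv_q4 {γ : List Unit} {i o r} (h : T0.TStep (St.q4, γ) i o r) :
    i = some c ∧ o = none ∧ r = (q3, () :: γ) := by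
  rcases r with ⟨r1, r2⟩
  rcases γ with _ | ⟨⟨⟩, γ₀⟩ <;> rcases i with _ | (_|_|_|_) <;>
    simp_all [StratPDA.TStep, T0, T0δ, Prod.ext_iff] <;> aesop

@[simp] lemma owner_q0 : gameOwner St.q0 = 1 := rfl
@[simp] lemma owner_q1 : gameOwner St.q1 = 1 := rfl
@[simp] lemma owner_q2 : gameOwner St.q2 = 0 := rfl
@[simp] lemma owner_q3 : gameOwner St.q3 = 0 := rfl
@[simp] lemma owner_q4 : gameOwner St.q4 = 1 := rfl

/-- Invariant along `T0`-consistent play prefixes. -/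
lemma T0inv {conf : ℕ → PDM.Conf St Unit} {lab : ℕ → Option Letter} {τ : ℕ → St × List Unit}
    {n : ℕ} (h0 : conf 0 = (St.q0, [])) (hτ0 : τ 0 = (St.q0, []))
    (hstep : ∀ k < n, gameM.Step (conf k) (lab k) (conf (k + 1)))
    (htstep : ∀ k < n, T0.TStep (τ k) (if gameOwner (conf k).1 = 0 then none else lab k)
      (if gameOwner (conf k).1 = 0 then lab k else none) (τ (k + 1))) :
    ∀ k ≤ n, τ k = conf k ∧ ((conf k).1 = q3 → (conf k).2 ≠ []) ∧
      ((conf k).1 = q4 → (conf k).2 = []) := by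
  intro k
  induction k with
  | zero => intro _; rw [h0, hτ0]; exact ⟨rfl, by simp, by simp⟩
  | succ k ih =>
    intro hk1
    obtain ⟨hτc, h3, h4⟩ := ih (by omega)
    have hs := hstep k (by omega)
    have ht := htstep k (by omega)
    rcases hc : conf k with ⟨qk, γk⟩
    rw [hc] at hs h3 h4
    rw [hτc, hc] at ht
    simp only [hc] at ht
    cases qk with
    | q0 =>
      simp only [owner_q0, if_neg (by decide : (1 : Fin 2) ≠ 0)] at ht
      rcases ginv_q0 hs with ⟨hl, hc'⟩ | ⟨γ₀, hγ, hl, hc'⟩ <;>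
        rcases t0inv_q0 ht with ⟨hi, ho, hr⟩ | ⟨γ₀', hγ', hi, ho, hr⟩ <;>
          rw [hl] at hi <;> simp_all [hc']
    | q1 =>
      simp only [owner_q1, if_neg (by decide : (1 : Fin 2) ≠ 0)] at ht
      rcases ginv_q1 hs with ⟨γ₀, hγ, hl, hc'⟩ | ⟨hl, hc'⟩ <;>
        rcases t0inv_q1 ht with ⟨γ₀', hγ', hi, ho, hr⟩ | ⟨hi, ho, hr⟩ <;>
          rw [hl] at hi <;> simp_all [hc']
    | q2 =>
      simp only [owner_q2, if_pos rfl] at ht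
      rcases ginv_q2 hs with ⟨hl, hc'⟩ | ⟨hl, hc'⟩ <;>
        rcases t0inv_q2 ht with ⟨hγ, hi, ho, hr⟩ | ⟨hγ, hi, ho, hr⟩ <;>
          rw [hl] at ho <;> simp_all [hc']
    | q3 =>
      simp only [owner_q3, if_pos rfl] at ht
      obtain ⟨hγ, hi, ho, hr⟩ := t0inv_q3 ht
      rcases ginv_q3 hs with ⟨hl, hc'⟩ | ⟨hne, hl, hc'⟩ <;>
        rw [hl] at ho <;> simp_all [hc']
    | q4 =>
      simp only [owner_q4, if_neg (by decide : (1 : Fin 2) ≠ 0)] at ht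
      obtain ⟨hi, ho, hr⟩ := t0inv_q4 ht
      rcases ginv_q4 hs with ⟨hl, hc'⟩ | ⟨hne, hl, hc'⟩ <;>
        rw [hl] at hi <;> simp_all [hc']

end Part3

section Part3b
open St Letter

lemma T0_winning : T0.IsWinningStrat gameM gameOwner (PDM.ParityAcc gameCol) 0 := by
  refine ⟨T0_det, ?_, ?_⟩
  · -- progress
    intro n conf lab τ h0 hτ0 hsteps htsteps
    obtain ⟨hτc, h3, h4⟩ := T0inv h0 hτ0 hsteps htsteps n le_rfl
    rcases hc : conf n with ⟨qn, γn⟩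
    rw [hc] at hτc h3 h4
    rw [hτc]
    simp only at h3 h4
    constructor
    · intro how
      cases qn with
      | q2 =>
        cases γn with
        | nil => exact ⟨some b, (q4, []), (q4, []), gstep_b2 [], rfl⟩
        | cons u γ₀ =>
          cases u
          exact ⟨some a, (q3, () :: γ₀), (q3, () :: γ₀), gstep_a2 _, ⟨[()], rfl, rfl⟩⟩
      | q3 =>
        have hne : γn ≠ [] := h3 rfl
        cases γn with
        | nil => exact absurd rfl hne
        | cons u γ₀ =>
          cases u
          exact ⟨some d, (q3, () :: γ₀), (q3, () :: γ₀), gstep_d3 _, ⟨[()], rfl, rfl⟩⟩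
      | q0 => simp at how
      | q1 => simp at how
      | q4 => simp at how
    · intro hne x c' hstepx
      cases qn with
      | q0 =>
        rcases ginv_q0 hstepx with ⟨hl, hc'⟩ | ⟨γ₀, hγ, hl, hc'⟩
        · subst hl
          cases γn with
          | nil => exact ⟨(q0, [()]), rfl⟩
          | cons u γ₀ =>
            cases u
            exact ⟨(q0, () :: () :: γ₀), ⟨[(), ()], rfl, rfl⟩⟩
        · subst hl; subst hγ
          exact ⟨(q1, γ₀), ⟨[], rfl, rfl⟩⟩
      | q1 =>
        rcases ginv_q1 hstepx with ⟨γ₀, hγ, hl, hc'⟩ | ⟨hl, hc'⟩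
        · subst hl; subst hγ
          exact ⟨(q1, γ₀), ⟨[], rfl, rfl⟩⟩
        · subst hl
          cases γn with
          | nil => exact ⟨(q2, []), rfl⟩
          | cons u γ₀ =>
            cases u
            exact ⟨(q2, () :: γ₀), ⟨[()], rfl, rfl⟩⟩
      | q4 =>
        have hγ : γn = [] := h4 rfl
        subst hγ
        rcases ginv_q4 hstepx with ⟨hl, hc'⟩ | ⟨hn0, hl, hc'⟩
        · subst hl
          exact ⟨(q3, [()]), rfl⟩
        · exact absurd rfl hn0
      | q2 => exact absurd rfl hne
      | q3 => exact absurd rfl hne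
  · -- winning
    intro conf lab τ hplay hcons
    refine iff_of_true ?_ rfl
    obtain ⟨h0, hsteps⟩ := hplay
    obtain ⟨hτ0, htsteps⟩ := hcons
    have inv : ∀ k, τ k = conf k ∧ ((conf k).1 = q3 → (conf k).2 ≠ []) ∧
        ((conf k).1 = q4 → (conf k).2 = []) := fun k =>
      T0inv h0 hτ0 (fun j _ => hsteps j) (fun j _ => htsteps j) k le_rfl
    have dyn3 : ∀ k, (conf k).1 = q3 → (conf (k + 1)).1 = q3 := by
      intro k h
      obtain ⟨hτc, h3, _⟩ := inv k
      have ht := htsteps k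
      have hs := hsteps k
      rcases hc : conf k with ⟨qk, γk⟩
      rw [hc] at h hs hτc ht
      simp only at h
      subst h
      rw [hτc] at ht
      have ht' : T0.TStep (q3, γk) none (lab k) (τ (k + 1)) := ht
      obtain ⟨hγ, hi, ho, hr⟩ := t0inv_q3 ht'
      rcases ginv_q3 hs with ⟨hl, hc'⟩ | ⟨hn0, hl, hc'⟩
      · rw [hl] at ho; exact absurd ho (by simp)
      · rw [hc']
    have dyn4 : ∀ k, (conf k).1 = q4 → (conf (k + 1)).1 = q3 := by
      intro k h
      obtain ⟨_, _, h4⟩ := inv k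
      have hs := hsteps k
      rcases hc : conf k with ⟨qk, γk⟩
      rw [hc] at h hs h4
      simp only at h
      subst h
      have hγ : γk = [] := h4 rfl
      subst hγ
      rcases ginv_q4 hs with ⟨hl, hc'⟩ | ⟨hn0, hl, hc'⟩
      · rw [hc']
      · exact absurd rfl hn0
    have dyn2 : ∀ k, (conf k).1 = q2 → (conf (k + 1)).1 = q3 ∨ (conf (k + 1)).1 = q4 := by
      intro k h
      have hs := hsteps k
      rcases hc : conf k with ⟨qk, γk⟩
      rw [hc] at h hs
      simp only at h
      subst h
      rcases ginv_q2 hs with ⟨hl, hc'⟩ | ⟨hl, hc'⟩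
      · left; rw [hc']
      · right; rw [hc']
    by_cases hq3 : ∃ k, (conf k).1 = q3
    · obtain ⟨N, hN⟩ := hq3
      have hall : ∀ m, N ≤ m → (conf m).1 = q3 := by
        intro m hm
        induction m, hm using Nat.le_induction with
        | base => exact hN
        | succ m hm ih => exact dyn3 m ih
      have hInf : PDM.InfOcc conf = {q3} := by
        ext q
        simp only [PDM.InfOcc, Set.mem_setOf_eq, Set.mem_singleton_iff]
        constructor
        · intro h
          obtain ⟨m, hm, hq⟩ := h N
          rw [← hq]; exact hall m hm
        · rintro rfl n
          exact ⟨max n N, le_max_left _ _, hall _ (le_max_right _ _)⟩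
      unfold PDM.ParityAcc
      rw [hInf, Set.image_singleton]
      norm_num [gameCol, csInf_singleton]
    · push_neg at hq3
      have hq4 : ∀ k, (conf k).1 ≠ q4 := fun k h => hq3 (k + 1) (dyn4 k h)
      have hq2 : ∀ k, (conf k).1 ≠ q2 := by
        intro k h
        rcases dyn2 k h with h' | h'
        · exact hq3 _ h'
        · exact hq4 _ h'
      have h01 : ∀ k, (conf k).1 = q0 ∨ (conf k).1 = q1 := by
        intro k
        cases h : (conf k).1 with
        | q0 => exact Or.inl rfl
        | q1 => exact Or.inr rfl
        | q2 => exact absurd h (hq2 k)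
        | q3 => exact absurd h (hq3 k)
        | q4 => exact absurd h (hq4 k)
      have hsub : ∀ q ∈ PDM.InfOcc conf, gameCol q = 2 := by
        intro q hq
        obtain ⟨m, _, hm⟩ := hq 0
        rcases h01 m with h | h <;> rw [hm] at h <;> rw [h] <;> rfl
      have hne : (PDM.InfOcc conf).Nonempty := by
        by_contra hempty
        rw [Set.not_nonempty_iff_eq_empty] at hempty
        have h0' : St.q0 ∉ PDM.InfOcc conf := by rw [hempty]; exact Set.notMem_empty _
        have h1' : St.q1 ∉ PDM.InfOcc conf := by rw [hempty]; exact Set.notMem_empty _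
        simp only [PDM.InfOcc, Set.mem_setOf_eq, not_forall] at h0' h1'
        obtain ⟨n0, hn0⟩ := h0'
        obtain ⟨n1, hn1⟩ := h1'
        push_neg at hn0 hn1
        rcases h01 (max n0 n1) with h | h
        · exact hn0 (max n0 n1) (le_max_left _ _) h
        · exact hn1 (max n0 n1) (le_max_right _ _) h
      have himg : gameCol '' PDM.InfOcc conf = {2} := by
        rw [Set.eq_singleton_iff_nonempty_unique_mem]
        exact ⟨hne.image _, fun x ⟨q, hq, hxq⟩ => hxq ▸ hsub q hq⟩
      unfold PDM.ParityAcc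
      rw [himg, csInf_singleton]
      decide

lemma part3 : ∃ (Γ' : Type) (_ : Finite Γ') (T : StratPDA Letter Γ'),
    Finite T.S ∧ T.IsWinningStrat gameM gameOwner (PDM.ParityAcc gameCol) 0 :=
  ⟨Unit, inferInstance, T0, inferInstanceAs (Finite St), T0_winning⟩

end Part3b

section Part4a
open St Letter

lemma TStep_det {T : StratPDA Letter Unit} {cfg : T.S × List Unit} {i o o' : Option Letter}
    {r r' : T.S × List Unit} (h : T.TStep cfg i o r) (h' : T.TStep cfg i o' r') :
    o = o' ∧ r = r' := by
  rcases cfg with ⟨s, γ⟩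
  rcases r with ⟨r1, r2⟩
  rcases r' with ⟨r1', r2'⟩
  cases γ with
  | nil =>
    have h1 : T.δ s i none = some (r1, r2, o) := h
    have h2 : T.δ s i none = some (r1', r2', o') := h'
    rw [h1] at h2
    simp only [Option.some.injEq, Prod.mk.injEq] at h2
    obtain ⟨e1, e2, e3⟩ := h2
    exact ⟨e3, by rw [e1, e2]⟩
  | cons t γ₀ =>
    obtain ⟨γ', hδ, hr⟩ := (h : ∃ γ', T.δ s i (some t) = some (r1, γ', o) ∧ r2 = γ' ++ γ₀)
    obtain ⟨γ'', hδ', hr'⟩ := (h' : ∃ γ'', T.δ s i (some t) = some (r1', γ'', o') ∧ r2' = γ'' ++ γ₀)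
    rw [hδ] at hδ'
    simp only [Option.some.injEq, Prod.mk.injEq] at hδ'
    obtain ⟨e1, e2, e3⟩ := hδ'
    have a1 : r2 = γ' ++ γ₀ := hr
    have a2 : r2' = γ'' ++ γ₀ := hr'
    exact ⟨e3, by rw [e1, a1, a2, e2]⟩

lemma blind_lift {T : StratPDA Letter Unit} (hB : T.Blind) {cfg : T.S × List Unit}
    {i o : Option Letter} {r : T.S × List Unit} (h : T.TStep cfg i o r) (p : List Unit) :
    T.TStep (cfg.1, cfg.2 ++ p) i o (r.1, r.2 ++ p) := by
  rcases cfg with ⟨s, γ⟩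
  cases γ with
  | nil =>
    have h1 : T.δ s i none = some (r.1, r.2, o) := h
    cases p with
    | nil =>
      show T.TStep (s, []) i o (r.1, r.2 ++ [])
      rw [List.append_nil]
      exact h
    | cons u p₀ =>
      cases u
      have h2 := hB s i (r.1, r.2, o) h1
      exact ⟨r.2 ++ [()], h2, by simp⟩
  | cons t γ₀ =>
    cases t
    obtain ⟨γ', hδ, hr⟩ := (h : ∃ γ', T.δ s i (some ()) = some (r.1, γ', o) ∧ r.2 = γ' ++ γ₀)
    exact ⟨γ', hδ, by simp [hr]⟩

/-- One consistency step of a transducer along a play. -/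
def ConsAt (T : StratPDA Letter Unit) (conf : ℕ → PDM.Conf St Unit) (lab : ℕ → Option Letter)
    (τ : ℕ → T.S × List Unit) (k : ℕ) : Prop :=
  T.TStep (τ k) (if gameOwner (conf k).1 = 0 then none else lab k)
    (if gameOwner (conf k).1 = 0 then lab k else none) (τ (k + 1))

/-- The "progress" clause of `IsWinningStrat` for Player 0 in the game `gameM`. -/
def Prog (T : StratPDA Letter Unit) : Prop :=
  ∀ (n : ℕ) (conf : ℕ → PDM.Conf St Unit) (lab : ℕ → Option Letter) (τ : ℕ → T.S × List Unit),
    conf 0 = (gameM.qin, []) → τ 0 = (T.sin, []) →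
    (∀ k < n, gameM.Step (conf k) (lab k) (conf (k + 1))) →
    (∀ k < n, T.TStep (τ k) (if gameOwner (conf k).1 = 0 then none else lab k)
        (if gameOwner (conf k).1 = 0 then lab k else none) (τ (k + 1))) →
    ((gameOwner (conf n).1 = 0 →
        ∃ (x : Option Letter) (c' : PDM.Conf St Unit) (τ' : T.S × List Unit),
          gameM.Step (conf n) x c' ∧ T.TStep (τ n) none x τ') ∧
     (gameOwner (conf n).1 ≠ 0 →
        ∀ (x : Option Letter) (c' : PDM.Conf St Unit), gameM.Step (conf n) x c' →
          ∃ τ' : T.S × List Unit, T.TStep (τ n) x none τ'))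

lemma consU {T : StratPDA Letter Unit} {conf : ℕ → PDM.Conf St Unit} {lab : ℕ → Option Letter}
    {τ τ' : ℕ → T.S × List Unit} {n : ℕ} (h0 : τ 0 = τ' 0)
    (h1 : ∀ k < n, ConsAt T conf lab τ k) (h2 : ∀ k < n, ConsAt T conf lab τ' k) :
    ∀ k ≤ n, τ k = τ' k := by
  intro k
  induction k with
  | zero => intro _; exact h0
  | succ k ih =>
    intro hk
    have e := ih (by omega)
    have c1 := h1 k (by omega)
    have c2 := h2 k (by omega)
    unfold ConsAt at c1 c2
    rw [e] at c1
    exact (TStep_det c1 c2).2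

/-- Extending a consistent prefix through opponent positions, finitely. -/
lemma PE {T : StratPDA Letter Unit} (hprog : Prog T) (conf : ℕ → PDM.Conf St Unit)
    (lab : ℕ → Option Letter) (h0 : conf 0 = (gameM.qin, [])) (N M : ℕ) (hNM : N ≤ M)
    (hstep : ∀ k < M, gameM.Step (conf k) (lab k) (conf (k + 1)))
    (hopp : ∀ k, N ≤ k → k < M → gameOwner (conf k).1 ≠ 0)
    (τ : ℕ → T.S × List Unit) (hτ0 : τ 0 = (T.sin, []))
    (hcons : ∀ k < N, ConsAt T conf lab τ k) :
    ∃ τ' : ℕ → T.S × List Unit, τ' 0 = (T.sin, []) ∧ (∀ k ≤ N, τ' k = τ k) ∧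
      ∀ k < M, ConsAt T conf lab τ' k := by
  obtain ⟨d, rfl⟩ : ∃ d, M = N + d := ⟨M - N, by omega⟩
  clear hNM
  induction d with
  | zero => exact ⟨τ, hτ0, fun _ _ => rfl, fun k hk => hcons k (by omega)⟩
  | succ d ih =>
    obtain ⟨τ', hτ'0, hagr, hcons'⟩ := ih (fun k hk => hstep k (by omega))
      (fun k hk1 hk2 => hopp k hk1 (by omega))
    have hp := (hprog (N + d) conf lab τ' h0 hτ'0 (fun k hk => hstep k (by omega))
        (fun k hk => hcons' k hk)).2 (hopp _ (by omega) (by omega)) (lab (N + d))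
        (conf (N + d + 1)) (hstep (N + d) (by omega))
    obtain ⟨τnext, hnext⟩ := hp
    refine ⟨fun k => if k ≤ N + d then τ' k else τnext, ?_, ?_, ?_⟩
    · show (if 0 ≤ N + d then τ' 0 else τnext) = (T.sin, [])
      rw [if_pos (by omega : 0 ≤ N + d)]; exact hτ'0
    · intro k hk
      show (if k ≤ N + d then τ' k else τnext) = τ k
      rw [if_pos (by omega : k ≤ N + d)]; exact hagr k hk
    · intro k hk
      unfold ConsAt
      show T.TStep (if k ≤ N + d then τ' k else τnext) _ _
        (if k + 1 ≤ N + d then τ' (k + 1) else τnext)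
      by_cases hkd : k < N + d
      · rw [if_pos (by omega : k ≤ N + d), if_pos (by omega : k + 1 ≤ N + d)]
        exact hcons' k hkd
      · have hke : k = N + d := by omega
        subst hke
        rw [if_pos (le_refl (N + d)), if_neg (by omega : ¬ N + d + 1 ≤ N + d),
          if_neg (hopp _ (by omega) (by omega)), if_neg (hopp _ (by omega) (by omega))]
        exact hnext

/-- Extending a consistent prefix through opponent positions, to infinity. -/
lemma TAIL {T : StratPDA Letter Unit} (hprog : Prog T) (conf : ℕ → PDM.Conf St Unit)
    (lab : ℕ → Option Letter) (h0 : conf 0 = (gameM.qin, []))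
    (hstep : ∀ k, gameM.Step (conf k) (lab k) (conf (k + 1))) (N : ℕ)
    (τ : ℕ → T.S × List Unit) (hτ0 : τ 0 = (T.sin, []))
    (hcons : ∀ k < N, ConsAt T conf lab τ k)
    (hopp : ∀ k, N ≤ k → gameOwner (conf k).1 ≠ 0) :
    ∃ τ' : ℕ → T.S × List Unit, τ' 0 = (T.sin, []) ∧ ∀ k, ConsAt T conf lab τ' k := by
  have H : ∀ d, ∃ τ' : ℕ → T.S × List Unit, τ' 0 = (T.sin, []) ∧ (∀ k ≤ N, τ' k = τ k) ∧
      ∀ k < N + d, ConsAt T conf lab τ' k := fun d =>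
    PE hprog conf lab h0 N (N + d) (by omega) (fun k _ => hstep k)
      (fun k hk _ => hopp k hk) τ hτ0 hcons
  choose τs hτs0 hagr hconss using H
  refine ⟨fun k => τs (k + 1) k, hτs0 1, ?_⟩
  intro k
  have e : τs (k + 2) k = τs (k + 1) k := by
    have := consU (T := T) (conf := conf) (lab := lab) (n := k)
      ((hτs0 (k + 2)).trans (hτs0 (k + 1)).symm)
      (fun j hj => hconss (k + 2) j (by omega))
      (fun j hj => hconss (k + 1) j (by omega))
    exact this k le_rfl
  have hc := hconss (k + 2) k (by omega)
  unfold ConsAt at hc ⊢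
  rw [e] at hc
  exact hc

lemma infocc_const {conf : ℕ → PDM.Conf St Unit} {q : St} {N : ℕ}
    (h : ∀ k, N ≤ k → (conf k).1 = q) : PDM.InfOcc conf = {q} := by
  ext q'
  simp only [PDM.InfOcc, Set.mem_setOf_eq, Set.mem_singleton_iff]
  constructor
  · intro hq
    obtain ⟨m, hm, hq'⟩ := hq N
    rw [← hq']; exact h m hm
  · rintro rfl n
    exact ⟨max n N, le_max_left _ _, h _ (le_max_right _ _)⟩

lemma not_parity_q4 {conf : ℕ → PDM.Conf St Unit} {N : ℕ}
    (h : ∀ k, N ≤ k → (conf k).1 = St.q4) : ¬ PDM.ParityAcc gameCol conf := by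
  unfold PDM.ParityAcc
  rw [infocc_const h, Set.image_singleton, csInf_singleton]
  decide

end Part4a

section Part4b
open St Letter

lemma rep_eq {x y : ℕ} (h : x = y + 1) :
    List.replicate x () = () :: List.replicate y () := by
  rw [h, List.replicate_succ]

lemma gstep_a' {γ γ' : List Unit} (h : γ' = () :: γ) :
    gameM.Step (St.q0, γ) (some a) (St.q0, γ') := h ▸ gstep_a γ
lemma gstep_b0' {γ γ' : List Unit} (h : γ = () :: γ') :
    gameM.Step (St.q0, γ) (some b) (St.q1, γ') := by rw [h]; exact gstep_b0 γ'
lemma gstep_b1' {γ γ' : List Unit} (h : γ = () :: γ') :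
    gameM.Step (St.q1, γ) (some b) (St.q1, γ') := by rw [h]; exact gstep_b1 γ'
lemma gstep_d4' {γ γ' : List Unit} (h : γ = () :: γ') :
    gameM.Step (St.q4, γ) (some d) (St.q4, γ) := by rw [h]; exact gstep_d4 γ'

/-- The play prefix `a^m b^j c`. -/
def pconf (m j k : ℕ) : PDM.Conf St Unit :=
  if k ≤ m then (St.q0, List.replicate k ())
  else if k ≤ m + j then (St.q1, List.replicate (m - (k - m)) ())
  else (St.q2, List.replicate (m - j) ())

def plab (m j k : ℕ) : Option Letter :=
  if k < m then some Letter.a else if k < m + j then some Letter.b else some Letter.c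

lemma pconf_le {m j k : ℕ} (h : k ≤ m) : pconf m j k = (St.q0, List.replicate k ()) := by
  unfold pconf; rw [if_pos h]
lemma pconf_mid {m j k : ℕ} (h1 : m < k) (h2 : k ≤ m + j) :
    pconf m j k = (St.q1, List.replicate (m - (k - m)) ()) := by
  unfold pconf; rw [if_neg (by omega), if_pos h2]
lemma pconf_end {m j k : ℕ} (h : m + j < k) :
    pconf m j k = (St.q2, List.replicate (m - j) ()) := by
  unfold pconf; rw [if_neg (by omega), if_neg (by omega)]
lemma pconf_zero (m j : ℕ) : pconf m j 0 = (gameM.qin, []) := by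
  rw [pconf_le (Nat.zero_le m)]; rfl

lemma plab_a {m j k : ℕ} (h : k < m) : plab m j k = some a := by
  unfold plab; rw [if_pos h]
lemma plab_b {m j k : ℕ} (h1 : m ≤ k) (h2 : k < m + j) : plab m j k = some b := by
  unfold plab; rw [if_neg (by omega), if_pos h2]
lemma plab_c {m j k : ℕ} (h : m + j ≤ k) : plab m j k = some c := by
  unfold plab; rw [if_neg (by omega), if_neg (by omega)]

lemma ow0 (γ : List Unit) : gameOwner ((St.q0, γ) : PDM.Conf St Unit).1 ≠ 0 := by show gameOwner St.q0 ≠ 0; decide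
lemma ow1 (γ : List Unit) : gameOwner ((St.q1, γ) : PDM.Conf St Unit).1 ≠ 0 := by show gameOwner St.q1 ≠ 0; decide
lemma ow2 (γ : List Unit) : gameOwner ((St.q2, γ) : PDM.Conf St Unit).1 = 0 := rfl
lemma ow3 (γ : List Unit) : gameOwner ((St.q3, γ) : PDM.Conf St Unit).1 = 0 := rfl
lemma ow4 (γ : List Unit) : gameOwner ((St.q4, γ) : PDM.Conf St Unit).1 ≠ 0 := by show gameOwner St.q4 ≠ 0; decide

lemma pconf_owner {m j : ℕ} (k : ℕ) (hk : k ≤ m + j) : gameOwner (pconf m j k).1 ≠ 0 := by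
  by_cases h1 : k ≤ m
  · rw [pconf_le h1]; exact ow0 _
  · rw [pconf_mid (by omega) hk]; exact ow1 _

lemma pconf_steps (m j : ℕ) (h1j : 1 ≤ j) (hjm : j ≤ m) :
    ∀ k < m + j + 1, gameM.Step (pconf m j k) (plab m j k) (pconf m j (k + 1)) := by
  intro k hk
  by_cases hka : k < m
  · rw [pconf_le (by omega), pconf_le (by omega), plab_a hka]
    exact gstep_a' ((List.replicate_succ (a := ()) (n := k)))
  · by_cases hkb : k = m
    · rw [pconf_le (by omega), pconf_mid (by omega) (by omega), plab_b (by omega) (by omega)]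
      exact gstep_b0' (rep_eq (by omega))
    · by_cases hkc : k < m + j
      · rw [pconf_mid (by omega) (by omega), pconf_mid (by omega) (by omega),
          plab_b (by omega) (by omega)]
        exact gstep_b1' (rep_eq (by omega))
      · have hke : k = m + j := by omega
        rw [pconf_mid (by omega) (by omega), pconf_end (by omega), plab_c (by omega)]
        have e : m - (k - m) = m - j := by omega
        rw [e]
        exact gstep_c1 _

/-- Gluing two trajectories at position `N`. -/
def glue {α : Type _} (τ1 τ2 : ℕ → α) (N k : ℕ) : α := if k ≤ N then τ1 k else τ2 k

lemma glue_le {α : Type _} {τ1 τ2 : ℕ → α} {N k : ℕ} (h : k ≤ N) :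
    glue τ1 τ2 N k = τ1 k := if_pos h
lemma glue_gt {α : Type _} {τ1 τ2 : ℕ → α} {N k : ℕ} (h : N < k) :
    glue τ1 τ2 N k = τ2 k := if_neg (by omega)

/-- Full play 1 in case the strategy answers `a` at `(q₂,⊥)`. -/
def conf1A (n k : ℕ) : PDM.Conf St Unit :=
  if k ≤ n + n + 1 then pconf n n k
  else if k = n + n + 2 then (St.q3, []) else (St.q4, [()])

def lab1A (n k : ℕ) : Option Letter :=
  if k < n + n + 1 then plab n n k
  else if k = n + n + 1 then some Letter.a
  else if k = n + n + 2 then some Letter.c else some Letter.d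

lemma conf1A_le {n k : ℕ} (h : k ≤ n + n + 1) : conf1A n k = pconf n n k := by
  unfold conf1A; rw [if_pos h]
lemma conf1A_mid (n : ℕ) : conf1A n (n + n + 2) = (St.q3, []) := by
  unfold conf1A; rw [if_neg (by omega), if_pos rfl]
lemma conf1A_gt {n k : ℕ} (h : n + n + 2 < k) : conf1A n k = (St.q4, [()]) := by
  unfold conf1A; rw [if_neg (by omega), if_neg (by omega)]
lemma conf1A_zero (n : ℕ) : conf1A n 0 = (gameM.qin, []) := by
  rw [conf1A_le (by omega)]; exact pconf_zero n n

lemma lab1A_lt {n k : ℕ} (h : k < n + n + 1) : lab1A n k = plab n n k := by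
  unfold lab1A; rw [if_pos h]
lemma lab1A_L (n : ℕ) : lab1A n (n + n + 1) = some a := by
  unfold lab1A; rw [if_neg (by omega), if_pos rfl]
lemma lab1A_L1 (n : ℕ) : lab1A n (n + n + 2) = some c := by
  unfold lab1A; rw [if_neg (by omega), if_neg (by omega), if_pos rfl]
lemma lab1A_gt {n k : ℕ} (h : n + n + 2 < k) : lab1A n k = some d := by
  unfold lab1A; rw [if_neg (by omega), if_neg (by omega), if_neg (by omega)]

lemma conf1A_q2 {n : ℕ} (h : 1 ≤ n) : conf1A n (n + n + 1) = (St.q2, []) := by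
  rw [conf1A_le le_rfl, pconf_end (by omega), Nat.sub_self]
  rfl

lemma conf1A_steps {n : ℕ} (h1 : 1 ≤ n) :
    ∀ k, gameM.Step (conf1A n k) (lab1A n k) (conf1A n (k + 1)) := by
  intro k
  by_cases hk1 : k < n + n + 1
  · rw [conf1A_le (by omega), conf1A_le (by omega), lab1A_lt hk1]
    exact pconf_steps n n h1 le_rfl k (by omega)
  · by_cases hk2 : k = n + n + 1
    · subst hk2
      rw [conf1A_q2 h1, conf1A_mid, lab1A_L]
      exact gstep_a2 []
    · by_cases hk3 : k = n + n + 2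
      · subst hk3
        rw [conf1A_mid, conf1A_gt (by omega), lab1A_L1]
        exact gstep_c3 []
      · rw [conf1A_gt (by omega), conf1A_gt (by omega), lab1A_gt (by omega)]
        exact gstep_d4 []

/-- Full play 2 in case the strategy answers `b` at `(q₂,⊥)`. -/
def conf2B (m j k : ℕ) : PDM.Conf St Unit :=
  if k ≤ m + j + 1 then pconf m j k else (St.q4, List.replicate (m - j) ())

def lab2B (m j k : ℕ) : Option Letter :=
  if k < m + j + 1 then plab m j k
  else if k = m + j + 1 then some Letter.b else some Letter.d

lemma conf2B_le {m j k : ℕ} (h : k ≤ m + j + 1) : conf2B m j k = pconf m j k := by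
  unfold conf2B; rw [if_pos h]
lemma conf2B_gt {m j k : ℕ} (h : m + j + 1 < k) :
    conf2B m j k = (St.q4, List.replicate (m - j) ()) := by
  unfold conf2B; rw [if_neg (by omega)]
lemma conf2B_zero (m j : ℕ) : conf2B m j 0 = (gameM.qin, []) := by
  rw [conf2B_le (by omega)]; exact pconf_zero m j

lemma lab2B_lt {m j k : ℕ} (h : k < m + j + 1) : lab2B m j k = plab m j k := by
  unfold lab2B; rw [if_pos h]
lemma lab2B_L (m j : ℕ) : lab2B m j (m + j + 1) = some b := by
  unfold lab2B; rw [if_neg (by omega), if_pos rfl]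
lemma lab2B_gt {m j k : ℕ} (h : m + j + 1 < k) : lab2B m j k = some d := by
  unfold lab2B; rw [if_neg (by omega), if_neg (by omega)]

lemma conf2B_q2 {m j : ℕ} (h : j < m) :
    conf2B m j (m + j + 1) = (St.q2, List.replicate (m - j) ()) := by
  rw [conf2B_le le_rfl, pconf_end (by omega)]

lemma conf2B_steps {m j : ℕ} (h1 : 1 ≤ j) (hjm : j < m) :
    ∀ k, gameM.Step (conf2B m j k) (lab2B m j k) (conf2B m j (k + 1)) := by
  intro k
  by_cases hk1 : k < m + j + 1
  · rw [conf2B_le (by omega), conf2B_le (by omega), lab2B_lt hk1]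
    exact pconf_steps m j h1 (by omega) k (by omega)
  · by_cases hk2 : k = m + j + 1
    · subst hk2
      rw [conf2B_q2 hjm, conf2B_gt (by omega), lab2B_L]
      exact gstep_b2 _
    · rw [conf2B_gt (by omega), conf2B_gt (by omega), lab2B_gt (by omega)]
      exact gstep_d4' (rep_eq (y := m - j - 1) (by omega))

lemma unit_ext {l l' : List Unit} (h : l.length = l'.length) : l = l' := by
  rw [unit_list l, unit_list l', h]

/-- Lifting a transducer trajectory by a constant counter surplus `p`, with index shift. -/
def liftedτ {β : Type _} (τ : ℕ → β × List Unit) (Δ : ℕ) (p : List Unit) (k : ℕ) :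
    β × List Unit :=
  ((τ (k - Δ)).1, (τ (k - Δ)).2 ++ p)

/-- The all-`a` play of Player 1. -/
def confa (k : ℕ) : PDM.Conf St Unit := (St.q0, List.replicate k ())

lemma confa_steps : ∀ k, gameM.Step (confa k) (some a) (confa (k + 1)) := fun k =>
  gstep_a' ((List.replicate_succ (a := ()) (n := k)))

lemma confa_owner (k : ℕ) : gameOwner (confa k).1 ≠ 0 := ow0 _

end Part4b

section Part4c
open St Letter

lemma part4 : ¬ ∃ T : StratPDA Letter Unit, Finite T.S ∧ T.Blind ∧
    T.IsWinningStrat gameM gameOwner (PDM.ParityAcc gameCol) 0 := by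
  rintro ⟨T, hfin, hblind, hdet, hprog0, hwin⟩
  have hprog : Prog T := hprog0
  -- the run of T on a^ω
  obtain ⟨τa, hτa0, hconsa⟩ := TAIL hprog confa (fun _ => some a) rfl confa_steps 0
    (fun _ => (T.sin, [])) rfl (fun k hk => absurd hk (by omega)) (fun k _ => confa_owner k)
  have ha : ∀ k, T.TStep (τa k) (some a) none (τa (k + 1)) := by
    intro k
    have h := hconsa k
    unfold ConsAt at h
    rwa [if_neg (confa_owner k), if_neg (confa_owner k)] at h
  -- pigeonhole: two positions with the same state and nondecreasing counter
  haveI := hfin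
  obtain ⟨s0, hs0c⟩ := Finite.exists_infinite_fiber (fun n => (τa (n + 1)).1)
  have hs0 : ((fun n => (τa (n + 1)).1) ⁻¹' {s0}).Infinite := Set.infinite_coe_iff.mp hs0c
  have hne : ((fun n => (τa (n + 1)).2.length) ''
      ((fun n => (τa (n + 1)).1) ⁻¹' {s0})).Nonempty := hs0.nonempty.image _
  obtain ⟨m1, hm1F, hg1⟩ := Nat.sInf_mem hne
  obtain ⟨m2, hm2F, hlt⟩ := hs0.exists_gt m1
  have hgle : (τa (m1 + 1)).2.length ≤ (τa (m2 + 1)).2.length := by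
    have h2 := Nat.sInf_le (Set.mem_image_of_mem (fun n => (τa (n + 1)).2.length) hm2F)
    rw [← hg1] at h2
    exact h2
  have hs12 : (τa (m1 + 1)).1 = (τa (m2 + 1)).1 := by
    have e1 : (τa (m1 + 1)).1 = s0 := hm1F
    have e2 : (τa (m2 + 1)).1 = s0 := hm2F
    rw [e1, e2]
  have hsplit : (τa (m2 + 1)).2 = (τa (m1 + 1)).2 ++
      List.replicate ((τa (m2 + 1)).2.length - (τa (m1 + 1)).2.length) () :=
    unit_ext (by rw [List.length_append, List.length_replicate]; omega)
  obtain ⟨n1, n2, p, h1n, h12, hglue⟩ : ∃ n1 n2 p, 1 ≤ n1 ∧ n1 < n2 ∧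
      τa n2 = ((τa n1).1, (τa n1).2 ++ p) :=
    ⟨m1 + 1, m2 + 1, _, by omega, by omega, by rw [Prod.ext_iff]; exact ⟨hs12.symm, hsplit⟩⟩
  clear hm1F hm2F hg1 hgle hs12 hsplit hne hs0 hs0c hlt
  -- the run of T on the prefix a^{n1} b^{n1}
  have hconsa1 : ∀ k < n1, ConsAt T (pconf n1 n1) (plab n1 n1) τa k := by
    intro k hk
    unfold ConsAt
    rw [pconf_le (by omega : k ≤ n1), plab_a hk, if_neg (ow0 _), if_neg (ow0 _)]
    exact ha k
  have hsteps1 := pconf_steps n1 n1 h1n le_rfl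
  obtain ⟨τ1, hτ10, hτ1agr, hcons1⟩ := PE hprog (pconf n1 n1) (plab n1 n1) (pconf_zero n1 n1)
    n1 (n1 + n1 + 1) (by omega) hsteps1
    (fun k _ hk2 => pconf_owner k (by omega)) τa hτa0 hconsa1
  have hq2c : pconf n1 n1 (n1 + n1 + 1) = (St.q2, []) := by
    rw [pconf_end (by omega), Nat.sub_self]; rfl
  have hp := (hprog (n1 + n1 + 1) (pconf n1 n1) (plab n1 n1) τ1 (pconf_zero n1 n1) hτ10
    hsteps1 (fun k hk => hcons1 k hk)).1 (by rw [hq2c]; rfl)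
  obtain ⟨x, c', τ', hstepx, htx⟩ := hp
  rw [hq2c] at hstepx
  rcases ginv_q2 hstepx with ⟨rfl, rfl⟩ | ⟨rfl, rfl⟩
  · -- CASE A : T answers `a` with empty counter at q2
    have hτe10 : glue τ1 (fun _ => τ') (n1 + n1 + 1) 0 = (T.sin, []) := by
      rw [glue_le (by omega)]; exact hτ10
    have hconsA : ∀ k < n1 + n1 + 2,
        ConsAt T (conf1A n1) (lab1A n1) (glue τ1 (fun _ => τ') (n1 + n1 + 1)) k := by
      intro k hk
      by_cases hkL : k < n1 + n1 + 1
      · unfold ConsAt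
        rw [glue_le (by omega), glue_le (by omega), conf1A_le (by omega), lab1A_lt hkL]
        exact hcons1 k hkL
      · have hke : k = n1 + n1 + 1 := by omega
        subst hke
        unfold ConsAt
        rw [glue_le le_rfl, glue_gt (by omega), conf1A_le le_rfl, hq2c, lab1A_L,
          if_pos (ow2 _), if_pos (ow2 _)]
        exact htx
    have hp2 := (hprog (n1 + n1 + 2) (conf1A n1) (lab1A n1)
      (glue τ1 (fun _ => τ') (n1 + n1 + 1)) (conf1A_zero n1) hτe10
      (fun k _ => conf1A_steps h1n k) (fun k hk => hconsA k hk)).1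
      (by rw [conf1A_mid]; rfl)
    obtain ⟨x2, c2, τ2', hstepx2, htx2⟩ := hp2
    rw [conf1A_mid] at hstepx2
    rcases ginv_q3 hstepx2 with ⟨rfl, rfl⟩ | ⟨hne0, -, -⟩
    swap
    · exact absurd rfl hne0
    have hτe20 : glue (glue τ1 (fun _ => τ') (n1 + n1 + 1)) (fun _ => τ2') (n1 + n1 + 2) 0
        = (T.sin, []) := by
      rw [glue_le (by omega)]; exact hτe10
    have hconsA2 : ∀ k < n1 + n1 + 3, ConsAt T (conf1A n1) (lab1A n1)
        (glue (glue τ1 (fun _ => τ') (n1 + n1 + 1)) (fun _ => τ2') (n1 + n1 + 2)) k := by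
      intro k hk
      by_cases hkL : k < n1 + n1 + 2
      · unfold ConsAt
        rw [glue_le (show k ≤ n1 + n1 + 2 by omega),
          glue_le (show k + 1 ≤ n1 + n1 + 2 by omega)]
        exact hconsA k hkL
      · have hke : k = n1 + n1 + 2 := by omega
        subst hke
        unfold ConsAt
        rw [glue_le le_rfl, glue_gt (show n1 + n1 + 2 < n1 + n1 + 3 by omega), conf1A_mid,
          lab1A_L1, if_pos (ow3 _), if_pos (ow3 _)]
        exact htx2
    obtain ⟨τω, hτω0, hconsω⟩ := TAIL hprog (conf1A n1) (lab1A n1) (conf1A_zero n1)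
      (conf1A_steps h1n) (n1 + n1 + 3) _ hτe20 hconsA2
      (fun k hk => by rw [conf1A_gt (by omega)]; exact ow4 _)
    have hpar := (hwin (conf1A n1) (lab1A n1) τω ⟨conf1A_zero n1, conf1A_steps h1n⟩
      ⟨hτω0, hconsω⟩).mpr rfl
    exact not_parity_q4 (N := n1 + n1 + 3) (fun k hk => by rw [conf1A_gt (by omega)]) hpar
  · -- CASE B : T answers `b`
    have hglue' : τa n2 = ((τ1 n1).1, (τ1 n1).2 ++ p) := by
      rw [hτ1agr n1 le_rfl]; exact hglue
    have hτ20 : glue τa (liftedτ τ1 (n2 - n1) p) n2 0 = (T.sin, []) := by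
      rw [glue_le (by omega)]; exact hτa0
    have hτ2val : ∀ k, n2 ≤ k → glue τa (liftedτ τ1 (n2 - n1) p) n2 k
        = ((τ1 (k - (n2 - n1))).1, (τ1 (k - (n2 - n1))).2 ++ p) := by
      intro k hk
      rcases eq_or_lt_of_le hk with he | hlt'
      · rw [← he, glue_le le_rfl, show n2 - (n2 - n1) = n1 from by omega]
        exact hglue'
      · rw [glue_gt hlt']; rfl
    have hcons2 : ∀ k < n2 + n1 + 1, ConsAt T (conf2B n2 n1) (lab2B n2 n1)
        (glue τa (liftedτ τ1 (n2 - n1) p) n2) k := by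
      intro k hk
      by_cases hka : k < n2
      · unfold ConsAt
        rw [glue_le (by omega), glue_le (by omega), conf2B_le (by omega), pconf_le (by omega),
          lab2B_lt (by omega), plab_a hka, if_neg (ow0 _), if_neg (ow0 _)]
        exact ha k
      · have hke : n2 ≤ k := by omega
        have hc1 := hcons1 (k - (n2 - n1)) (by omega)
        unfold ConsAt at hc1
        rw [if_neg (pconf_owner _ (by omega)), if_neg (pconf_owner _ (by omega))] at hc1
        have hlab : lab2B n2 n1 k = plab n1 n1 (k - (n2 - n1)) := by
          rw [lab2B_lt hk]
          by_cases hcc : k < n2 + n1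
          · rw [plab_b (by omega) hcc, plab_b (by omega) (by omega)]
          · rw [plab_c (by omega), plab_c (by omega)]
        have hlift := blind_lift hblind hc1 p
        unfold ConsAt
        rw [hτ2val k hke, hτ2val (k + 1) (by omega), conf2B_le (by omega), hlab,
          if_neg (pconf_owner _ (by omega)), if_neg (pconf_owner _ (by omega)),
          show k + 1 - (n2 - n1) = k - (n2 - n1) + 1 from by omega]
        exact hlift
    have hτe0 : glue (glue τa (liftedτ τ1 (n2 - n1) p) n2) (fun _ => (τ'.1, τ'.2 ++ p))
        (n2 + n1 + 1) 0 = (T.sin, []) := by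
      rw [glue_le (by omega)]; exact hτ20
    have hconsB : ∀ k < n2 + n1 + 2, ConsAt T (conf2B n2 n1) (lab2B n2 n1)
        (glue (glue τa (liftedτ τ1 (n2 - n1) p) n2) (fun _ => (τ'.1, τ'.2 ++ p))
          (n2 + n1 + 1)) k := by
      intro k hk
      by_cases hkL : k < n2 + n1 + 1
      · unfold ConsAt
        rw [glue_le (show k ≤ n2 + n1 + 1 by omega),
          glue_le (show k + 1 ≤ n2 + n1 + 1 by omega)]
        exact hcons2 k hkL
      · have hke : k = n2 + n1 + 1 := by omega
        subst hke
        unfold ConsAt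
        rw [glue_le le_rfl, glue_gt (show n2 + n1 + 1 < n2 + n1 + 2 by omega),
          conf2B_q2 (by omega), lab2B_L,
          if_pos (ow2 _), if_pos (ow2 _), hτ2val _ (by omega),
          show n2 + n1 + 1 - (n2 - n1) = n1 + n1 + 1 from by omega]
        exact blind_lift hblind htx p
    obtain ⟨τω, hτω0, hconsω⟩ := TAIL hprog (conf2B n2 n1) (lab2B n2 n1) (conf2B_zero n2 n1)
      (conf2B_steps h1n (by omega)) (n2 + n1 + 2) _ hτe0 hconsB
      (fun k hk => by rw [conf2B_gt (by omega)]; exact ow4 _)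
    have hpar := (hwin (conf2B n2 n1) (lab2B n2 n1) τω
      ⟨conf2B_zero n2 n1, conf2B_steps h1n (by omega)⟩ ⟨hτω0, hconsω⟩).mpr rfl
    exact not_parity_q4 (N := n2 + n1 + 2) (fun k hk => by rw [conf2B_gt (by omega)]) hpar

end Part4c

/-- In the specific blind one-counter parity game `G(A)` above,
Player 0 has a winning strategy from the initial configuration `(q₀,⊥)` realizable by a
deterministic pushdown automaton with output, but no deterministic blind one-counter
automaton with output realizes a winning strategy for Player 0. -/
theorem concrete_blind_game_dpda_strategy_but_no_blind_strategy :
    gameM.Deterministic ∧ gameM.Blind ∧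
    (∃ (Γ' : Type) (_ : Finite Γ') (T : StratPDA Letter Γ'),
        Finite T.S ∧ T.IsWinningStrat gameM gameOwner (PDM.ParityAcc gameCol) 0) ∧
    ¬ ∃ T : StratPDA Letter Unit, Finite T.S ∧ T.Blind ∧
        T.IsWinningStrat gameM gameOwner (PDM.ParityAcc gameCol) 0 :=
  ⟨gameM_det, gameM_blind, part3, part4⟩
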